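/- The ⋆-product of q-symmetric generating series is associative: for any three q-symmetric generating series 𝒜(ū), ℬ(ū), 𝒞(ū) one has (𝒜 ⋆ ℬ) ⋆ 𝒞 = 𝒜 ⋆ (ℬ ⋆ 𝒞), i.e. for every multi-index n̄ the coefficients of both sides at u_1^{n_1}⋯u_{N−1}^{n_{N−1}} coincide. -/

import Mathlib

noncomputable section

open scoped TensorProduct
open MvPolynomial

/-! ## Rational functions and the q-symmetrization machinery -/

variable (K : Type) [Field K] (ι : Type)

/-- The field `K(t)` of rational functions in the variables `t_i`, `i : ι`. -/
abbrev RatF := FractionRing (MvPolynomial ι K)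

/-- The variable `t_i` as a rational function. -/
def tvar (i : ι) : RatF K ι := algebraMap (MvPolynomial ι K) (RatF K ι) (X i)

/-- A scalar `c : K` as a constant rational function. -/
def cst (c : K) : RatF K ι := algebraMap K (RatF K ι) c

/-- Substitution of variables `t_i ↦ t_{f i}` along an injective map `f`, as a `K`-algebra
endomorphism of the field of rational functions. -/
def renHom (f : ι → ι) (hf : Function.Injective f) : RatF K ι →ₐ[K] RatF K ι :=
  IsFractionRing.liftAlgHom (R := K)
    (g := (IsScalarTower.toAlgHom K (MvPolynomial ι K) (RatF K ι)).comp (rename f))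
    ((IsFractionRing.injective _ _).comp (rename_injective f hf))

variable (A : Type) [Ring A] [Algebra K A]

/-- The algebra `A(t) = A ⊗_K K(t)` of `A`-valued rational functions. -/
abbrev AVal := A ⊗[K] RatF K ι

/-- The embedding `K(t) → A(t)`. -/
def inF : RatF K ι →ₐ[K] AVal K ι A := Algebra.TensorProduct.includeRight

/-- Substitution of variables `t_i ↦ t_{f i}` on `A`-valued rational functions. -/
def renA (f : ι → ι) (hf : Function.Injective f) : AVal K ι A →ₐ[K] AVal K ι A :=
  Algebra.TensorProduct.map (AlgHom.id K A) (renHom K ι f hf)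

/-- Extension of a permutation of `Fin k` to a permutation of the whole variable index set `ι`
along an injective enumeration `v : Fin k → ι` of some of the variables. -/
def extPerm {k : ℕ} (v : Fin k → ι) (hv : Function.Injective v) (σ : Equiv.Perm (Fin k)) :
    Equiv.Perm ι :=
  letI := Classical.decPred (· ∈ Set.range v)
  σ.extendDomain (Equiv.ofInjective v hv)

variable (q : K)

/-- The elementary weight `w(t_i/t_j) = (q⁻¹ − q t_i/t_j)/(q − q⁻¹ t_i/t_j)`. -/
def wfac (i j : ι) : RatF K ι :=
  (cst K ι q⁻¹ - cst K ι q * (tvar K ι i / tvar K ι j)) /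
    (cst K ι q - cst K ι q⁻¹ * (tvar K ι i / tvar K ι j))

/-- The weight `∏_{ℓ<ℓ', σ(ℓ)>σ(ℓ')} w(t_{σ(ℓ')}/t_{σ(ℓ)})` of the operator `π(σ)` acting on
functions of the variables `t_{v 0}, …, t_{v (k-1)}`. -/
def qWeight {k : ℕ} (v : Fin k → ι) (σ : Equiv.Perm (Fin k)) : RatF K ι :=
  ∏ p ∈ Finset.univ.filter (fun p : Fin k × Fin k => p.1 < p.2 ∧ σ p.2 < σ p.1),
    wfac K ι q (v (σ p.2)) (v (σ p.1))

/-- The operator `π(σ)`, `σ ∈ S_k`: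
`π(σ)G = ∏_{ℓ<ℓ', σ(ℓ)>σ(ℓ')} w(t_{σ(ℓ')}/t_{σ(ℓ)}) ⬝ G(t_{σ(1)},…,t_{σ(k)})`, acting on `A`-valued
rational functions of the variables `t_{v 0}, …, t_{v (k-1)}`. -/
def piOp {k : ℕ} (v : Fin k → ι) (hv : Function.Injective v) (σ : Equiv.Perm (Fin k)) :
    AVal K ι A → AVal K ι A := fun G =>
  inF K ι A (qWeight K ι q v σ) * renA K ι A (extPerm ι v hv σ) (Equiv.injective _) G

/-- The operator `π(σ_{i,j})` attached to a transposition: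
`π(σ_{i,j})G = w(t_i/t_j) ⬝ (G with t_i, t_j interchanged)`.  For `j = i+1` this is the
operator `π(σ_{i,i+1})` of the paper. -/
def piElem (i j : ι) : AVal K ι A → AVal K ι A := fun G =>
  letI := Classical.decEq ι
  inF K ι A (wfac K ι q i j) * renA K ι A (Equiv.swap i j) (Equiv.injective _) G

/-- The `q`-symmetrization operator `Sym̄ = (1/k!) ∑_{σ ∈ S_k} π(σ)` over the variables
`t_{v 0}, …, t_{v (k-1)}`. -/
def qSym {k : ℕ} (v : Fin k → ι) (hv : Function.Injective v) :
    AVal K ι A → AVal K ι A := fun G =>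
  ((k.factorial : K))⁻¹ • ∑ σ : Equiv.Perm (Fin k), piOp K ι A q v hv σ G

/-! ## Multi-type generating series -/

/-- For the algebra with `N − 1` types of variables, the variables are `t^a_i`, indexed by
pairs `(a, i) : ℕ × ℕ` (the type `a` and the position `i`). -/
abbrev ιM : Type := ℕ × ℕ

/-- The enumeration of the first `m` variables of type `a`. -/
def vtype (a m : ℕ) : Fin m → ιM := fun i => (a, (i : ℕ))

theorem vtype_inj (a m : ℕ) : Function.Injective (vtype a m) := fun x y h =>
  Fin.val_injective (congrArg Prod.snd h)

/-- The `q`-symmetrization over the variables `t̄_{n̄}`, applied independently to the variables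
of each type: for each type `a` the first `n̄ a` variables of that type are `q`-symmetrized. -/
def symM (n : ℕ →₀ ℕ) : AVal K ιM A → AVal K ιM A :=
  (n.support.sort (· ≤ ·)).foldr
    (fun a F => (qSym K ιM A q (vtype a (n a)) (vtype_inj a (n a)) ∘ F)) id

/-- The shift of variables `t^a_i ↦ t^a_{i + s a}` (each type shifted by its own amount). -/
def shiftFun (s : ℕ → ℕ) : ιM → ιM := fun x => (x.1, x.2 + s x.1)

theorem shiftFun_inj (s : ℕ → ℕ) : Function.Injective (shiftFun s) := by
  rintro ⟨a, i⟩ ⟨b, j⟩ h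
  simp only [shiftFun, Prod.mk.injEq] at h
  obtain ⟨rfl, h2⟩ := h
  simp only [Prod.mk.injEq, true_and]
  omega

/-- The rational series `Z_{s̄}(t̄_{n̄})`. -/
def Zser (N : ℕ) (s n : ℕ →₀ ℕ) : RatF K ιM :=
  ∏ a ∈ Finset.range (N - 2), ∏ l ∈ Finset.Ico (s a) (n a), ∏ l' ∈ Finset.range (s (a + 1)),
    (cst K ιM q - cst K ιM q⁻¹ * (tvar K ιM (a, l) / tvar K ιM (a + 1, l'))) /
      (1 - tvar K ιM (a, l) / tvar K ιM (a + 1, l'))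

/-- A `q`-symmetric generating series in the parameters `u_1, …, u_{N-1}`: the family of its
coefficients `𝒜(t̄_{n̄})`, indexed by multi-indices `n̄` (finitely supported, and supported on
the types `1, …, N−1`, represented `0`-based as `{0, …, N−2}`); the coefficient `𝒜(t̄_{n̄})`
is an `A`-valued rational function depending only on the variables `t̄_{n̄}`, `q`-symmetric in
the variables of each type, and the free coefficient is `1`. -/
structure QSeriesM (N : ℕ) : Type where
  /-- The coefficient at `u_1^{n̄ 0} ⋯ u_{N-1}^{n̄ (N-2)}`. -/
  coeff : (ℕ →₀ ℕ) → AVal K ιM A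
  coeff_zero : coeff 0 = 1
  supp_types : ∀ n : ℕ →₀ ℕ, (¬ ∀ a, N - 1 ≤ a → n a = 0) → coeff n = 0
  qsymm : ∀ (n : ℕ →₀ ℕ) (a : ℕ) (σ : Equiv.Perm (Fin (n a))),
    piOp K ιM A q (vtype a (n a)) (vtype_inj a (n a)) σ (coeff n) = coeff n
  supp_vars : ∀ (n : ℕ →₀ ℕ) (f : ιM → ιM) (hf : Function.Injective f),
    (∀ a i, i < n a → f (a, i) = (a, i)) → renA K ιM A f hf (coeff n) = coeff n

/-- The coefficient at `u^{n̄}` of the `⋆`-product of two generating series given by their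
coefficient families:
`(𝒜⋆ℬ)(t̄_{n̄}) = ∑_{0̄ ≤ s̄ ≤ n̄} Sym̄_{t̄_{n̄}}( Z_{s̄}(t̄_{n̄}) ⬝ 𝒜(t̄_{(s̄,n̄]}) ⬝ ℬ(t̄_{(0̄,s̄]}) )`. -/
def starM (N : ℕ) (f g : (ℕ →₀ ℕ) → AVal K ιM A) (n : ℕ →₀ ℕ) : AVal K ιM A :=
  ∑ s ∈ Finset.Iic n,
    symM K A q n
      (inF K ιM A (Zser K q N s n) *
        (renA K ιM A (shiftFun (s ·)) (shiftFun_inj _) (f (n - s)) * g s))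

/-- The coefficients of the unit generating series `1`. -/
def oneM : (ℕ →₀ ℕ) → AVal K ιM A := fun n => if n = 0 then 1 else 0

/-- A multi-index is admissible if `n_1 ≥ n_2 ≥ ⋯`. -/
def Adm (n : ℕ →₀ ℕ) : Prop := ∀ a, n (a + 1) ≤ n a


section BasicLemmas

open Finset Equiv

variable {K : Type} [Field K] {ι : Type}

theorem tvar_ne_zero (i : ι) : tvar K ι i ≠ 0 := by
  simp only [tvar, ne_eq, map_eq_zero_iff _ (IsFractionRing.injective (MvPolynomial ι K) (RatF K ι))]
  exact X_ne_zero i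

theorem renHom_algebraMap (f : ι → ι) (hf : Function.Injective f) (p : MvPolynomial ι K) :
    renHom K ι f hf (algebraMap (MvPolynomial ι K) (RatF K ι) p)
      = algebraMap (MvPolynomial ι K) (RatF K ι) (rename f p) := by
  simp [renHom, IsFractionRing.liftAlgHom, IsLocalization.liftAlgHom_apply, IsLocalization.lift_eq]

theorem renHom_tvar (f : ι → ι) (hf : Function.Injective f) (i : ι) :
    renHom K ι f hf (tvar K ι i) = tvar K ι (f i) := by
  rw [tvar, renHom_algebraMap, rename_X]; rfl

theorem renHom_ext {g1 g2 : RatF K ι →ₐ[K] RatF K ι}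
    (h : ∀ p : MvPolynomial ι K, g1 (algebraMap _ _ p) = g2 (algebraMap _ _ p)) : g1 = g2 := by
  apply AlgHom.coe_ringHom_injective
  apply IsLocalization.ringHom_ext (nonZeroDivisors (MvPolynomial ι K))
  exact RingHom.ext h

theorem renHom_comp (f g : ι → ι) (hf : Function.Injective f) (hg : Function.Injective g)
    (x : RatF K ι) :
    renHom K ι f hf (renHom K ι g hg x) = renHom K ι (f ∘ g) (hf.comp hg) x := by
  have : (renHom K ι f hf).comp (renHom K ι g hg) = renHom K ι (f ∘ g) (hf.comp hg) := by
    apply renHom_ext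
    intro p
    simp only [AlgHom.comp_apply, renHom_algebraMap, rename_rename]
  have h2 := DFunLike.congr_fun this x
  simpa using h2

theorem renHom_id (hid : Function.Injective (id : ι → ι)) (x : RatF K ι) :
    renHom K ι id hid x = x := by
  have : renHom K ι id hid = AlgHom.id K (RatF K ι) := by
    apply renHom_ext
    intro p
    simp [renHom_algebraMap]
  rw [this]; rfl

theorem renHom_congr {f g : ι → ι} (hf : Function.Injective f) (hg : Function.Injective g)
    (h : f = g) (x : RatF K ι) : renHom K ι f hf x = renHom K ι g hg x := by subst h; rfl

variable {A : Type} [Ring A] [Algebra K A]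

theorem renA_inF (f : ι → ι) (hf : Function.Injective f) (z : RatF K ι) :
    renA K ι A f hf (inF K ι A z) = inF K ι A (renHom K ι f hf z) := by
  show Algebra.TensorProduct.map (AlgHom.id K A) (renHom K ι f hf) ((1 : A) ⊗ₜ[K] z)
      = (1 : A) ⊗ₜ[K] (renHom K ι f hf z)
  rw [Algebra.TensorProduct.map_tmul]
  simp

theorem inF_commute (z : RatF K ι) (G : AVal K ι A) :
    inF K ι A z * G = G * inF K ι A z := by
  induction G using TensorProduct.induction_on with
  | zero => simp
  | tmul a f =>
    simp only [inF, Algebra.TensorProduct.includeRight_apply,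
      Algebra.TensorProduct.tmul_mul_tmul, one_mul, mul_one, mul_comm]
  | add x y hx hy => rw [mul_add, add_mul, hx, hy]

theorem renA_comp (f g : ι → ι) (hf : Function.Injective f) (hg : Function.Injective g)
    (x : AVal K ι A) :
    renA K ι A f hf (renA K ι A g hg x) = renA K ι A (f ∘ g) (hf.comp hg) x := by
  induction x using TensorProduct.induction_on with
  | zero => simp
  | tmul a h => simp [renA, Algebra.TensorProduct.map_tmul, renHom_comp]
  | add x y hx hy => simp only [map_add, hx, hy]

theorem renA_id (hid : Function.Injective (id : ι → ι)) (x : AVal K ι A) :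
    renA K ι A id hid x = x := by
  induction x using TensorProduct.induction_on with
  | zero => simp
  | tmul a h => simp [renA, Algebra.TensorProduct.map_tmul, renHom_id]
  | add x y hx hy => simp only [map_add, hx, hy]

theorem renA_congr {f g : ι → ι} (hf : Function.Injective f) (hg : Function.Injective g)
    (h : f = g) (x : AVal K ι A) : renA K ι A f hf x = renA K ι A g hg x := by subst h; rfl

end BasicLemmas
section WfacLemmas

open Finset Equiv

variable {K : Type} [Field K] {ι : Type} {q : K}

theorem cst_eq (c : K) : cst K ι c = algebraMap (MvPolynomial ι K) (RatF K ι) (C c) := by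
  rw [cst, IsScalarTower.algebraMap_apply K (MvPolynomial ι K) (RatF K ι), MvPolynomial.algebraMap_eq]

theorem den_ne_zero (hq : q ≠ 0) {i j : ι} (hij : i ≠ j) :
    cst K ι q - cst K ι q⁻¹ * (tvar K ι i / tvar K ι j) ≠ 0 := by
  intro h
  rw [sub_eq_zero, ← mul_div_assoc, eq_div_iff (tvar_ne_zero j), eq_comm] at h
  have h3 : algebraMap (MvPolynomial ι K) (RatF K ι) (C q⁻¹ * X i)
      = algebraMap (MvPolynomial ι K) (RatF K ι) (C q * X j) := by
    rw [map_mul, map_mul, ← cst_eq, ← cst_eq, ← tvar, ← tvar]; exact h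
  have h4 := IsFractionRing.injective (MvPolynomial ι K) (RatF K ι) h3
  classical
  have h5 := congrArg (coeff (Finsupp.single j 1)) h4
  rw [coeff_C_mul, coeff_C_mul, coeff_X, coeff_X',
    if_neg (by simp [Finsupp.single_eq_single_iff, hij])] at h5
  simp only [mul_one, mul_zero] at h5
  exact hq (by simpa using h5.symm)

theorem wfac_mul_inv (hq : q ≠ 0) {i j : ι} (hij : i ≠ j) :
    wfac K ι q i j * wfac K ι q j i = 1 := by
  have d1 := den_ne_zero (ι := ι) hq hij
  have d2 := den_ne_zero (ι := ι) hq hij.symm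
  have ti := tvar_ne_zero (K := K) i
  have tj := tvar_ne_zero (K := K) j
  rw [wfac, wfac, div_mul_div_comm, div_eq_one_iff_eq (mul_ne_zero d1 d2)]
  field_simp
  ring

theorem renHom_cst (f : ι → ι) (hf : Function.Injective f) (c : K) :
    renHom K ι f hf (cst K ι c) = cst K ι c := by
  rw [cst]; exact AlgHom.commutes _ c

theorem renHom_wfac (f : ι → ι) (hf : Function.Injective f) (i j : ι) :
    renHom K ι f hf (wfac K ι q i j) = wfac K ι q (f i) (f j) := by
  rw [wfac, wfac, map_div₀, map_sub, map_sub, map_mul, map_mul, map_div₀,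
    renHom_cst, renHom_cst, renHom_tvar, renHom_tvar]

end WfacLemmas

section Cocycle

open Finset Equiv

variable {K : Type} [Field K] {ι : Type} {q : K}

theorem extPerm_apply_v {k : ℕ} {v : Fin k → ι} (hv : Function.Injective v)
    (σ : Equiv.Perm (Fin k)) (i : Fin k) : extPerm ι v hv σ (v i) = v (σ i) := by
  letI := Classical.decPred (· ∈ Set.range v)
  unfold extPerm
  exact Equiv.Perm.extendDomain_apply_image σ (Equiv.ofInjective v hv) i

theorem extPerm_apply_not_mem {k : ℕ} {v : Fin k → ι} (hv : Function.Injective v)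
    (σ : Equiv.Perm (Fin k)) {x : ι} (hx : x ∉ Set.range v) : extPerm ι v hv σ x = x := by
  letI := Classical.decPred (· ∈ Set.range v)
  unfold extPerm
  exact Equiv.Perm.extendDomain_apply_not_subtype σ (Equiv.ofInjective v hv) hx

theorem extPerm_mul {k : ℕ} {v : Fin k → ι} (hv : Function.Injective v)
    (σ τ : Equiv.Perm (Fin k)) (x : ι) :
    extPerm ι v hv σ (extPerm ι v hv τ x) = extPerm ι v hv (σ * τ) x := by
  rw [show extPerm ι v hv σ (extPerm ι v hv τ x)
      = (extPerm ι v hv σ * extPerm ι v hv τ) x from rfl]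
  congr 1
  letI := Classical.decPred (· ∈ Set.range v)
  unfold extPerm
  exact Equiv.Perm.extendDomain_mul _ σ τ

theorem extPerm_one {k : ℕ} {v : Fin k → ι} (hv : Function.Injective v) (x : ι) :
    extPerm ι v hv 1 x = x := by
  letI := Classical.decPred (· ∈ Set.range v)
  unfold extPerm
  rw [Equiv.Perm.extendDomain_one]
  rfl

theorem qWeight_eq {k : ℕ} (v : Fin k → ι) (σ : Equiv.Perm (Fin k)) :
    qWeight K ι q v σ = ∏ p ∈ Finset.univ.filter (fun p : Fin k × Fin k => p.1 < p.2),
      (if σ p.2 < σ p.1 then wfac K ι q (v (σ p.2)) (v (σ p.1)) else 1) := by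
  rw [qWeight, Finset.prod_filter, Finset.prod_filter]
  apply Finset.prod_congr rfl
  intro p _
  by_cases h1 : p.1 < p.2 <;> by_cases h2 : σ p.2 < σ p.1 <;> simp [h1, h2]

/-- Auxiliary: apply a permutation to an ordered pair and re-sort it. -/
def pairSort {k : ℕ} (τ : Equiv.Perm (Fin k)) (p : Fin k × Fin k) : Fin k × Fin k :=
  if τ p.1 < τ p.2 then (τ p.1, τ p.2) else (τ p.2, τ p.1)

theorem pairSort_lt {k : ℕ} (τ : Equiv.Perm (Fin k)) {p : Fin k × Fin k} (hp : p.1 < p.2) :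
    (pairSort τ p).1 < (pairSort τ p).2 := by
  rw [pairSort]
  by_cases h1 : τ p.1 < τ p.2
  · simpa [h1] using h1
  · have hne : τ p.1 ≠ τ p.2 := fun hc => absurd (τ.injective hc) (ne_of_lt hp)
    have h2 : τ p.2 < τ p.1 := lt_of_le_of_ne (not_lt.mp h1) hne.symm
    simpa [h1] using h2

theorem pairSort_inv {k : ℕ} (τ : Equiv.Perm (Fin k)) {p : Fin k × Fin k} (hp : p.1 < p.2) :
    pairSort τ⁻¹ (pairSort τ p) = p := by
  rw [pairSort, pairSort]
  by_cases h1 : τ p.1 < τ p.2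
  · simp only [h1, if_true]
    simp only [Equiv.Perm.inv_def, Equiv.symm_apply_apply]
    rw [if_pos hp]
  · simp only [h1, if_false]
    simp only [Equiv.Perm.inv_def, Equiv.symm_apply_apply]
    rw [if_neg (not_lt.mpr (le_of_lt hp))]

theorem qWeight_cocycle (hq : q ≠ 0) {k : ℕ} {v : Fin k → ι} (hv : Function.Injective v)
    (σ τ : Equiv.Perm (Fin k)) :
    qWeight K ι q v (σ * τ)
      = qWeight K ι q v σ
        * renHom K ι (extPerm ι v hv σ) (Equiv.injective _) (qWeight K ι q v τ) := by
  classical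
  rw [qWeight_eq v (σ * τ), qWeight_eq v σ, qWeight_eq v τ, map_prod]
  have hren : ∀ p : Fin k × Fin k,
      renHom K ι (extPerm ι v hv σ) (Equiv.injective _)
        (if τ p.2 < τ p.1 then wfac K ι q (v (τ p.2)) (v (τ p.1)) else 1)
      = (if τ p.2 < τ p.1 then wfac K ι q (v (σ (τ p.2))) (v (σ (τ p.1))) else 1) := by
    intro p
    rw [apply_ite (renHom K ι (extPerm ι v hv σ) (Equiv.injective _)), map_one,
      renHom_wfac, extPerm_apply_v hv, extPerm_apply_v hv]
  rw [Finset.prod_congr rfl (fun p _ => hren p)]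
  have hreidx : (∏ p ∈ Finset.univ.filter (fun p : Fin k × Fin k => p.1 < p.2),
        (if σ p.2 < σ p.1 then wfac K ι q (v (σ p.2)) (v (σ p.1)) else 1))
      = ∏ p ∈ Finset.univ.filter (fun p : Fin k × Fin k => p.1 < p.2),
        (if σ ((pairSort τ p).2) < σ ((pairSort τ p).1)
          then wfac K ι q (v (σ ((pairSort τ p).2))) (v (σ ((pairSort τ p).1))) else 1) := by
    apply Finset.prod_nbij' (pairSort τ⁻¹) (pairSort τ)
    · intro p hp
      simp only [Finset.mem_filter, Finset.mem_univ, true_and] at hp ⊢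
      exact pairSort_lt τ⁻¹ hp
    · intro p hp
      simp only [Finset.mem_filter, Finset.mem_univ, true_and] at hp ⊢
      exact pairSort_lt τ hp
    · intro p hp
      simp only [Finset.mem_filter, Finset.mem_univ, true_and] at hp
      have := pairSort_inv τ⁻¹ (p := p) hp
      rwa [inv_inv] at this
    · intro p hp
      simp only [Finset.mem_filter, Finset.mem_univ, true_and] at hp
      exact pairSort_inv τ hp
    · intro p hp
      simp only [Finset.mem_filter, Finset.mem_univ, true_and] at hp
      have e1 : pairSort τ (pairSort τ⁻¹ p) = p := by
        have := pairSort_inv τ⁻¹ (p := p) hp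
        rwa [inv_inv] at this
      rw [e1]
  rw [hreidx, ← Finset.prod_mul_distrib]
  apply Finset.prod_congr rfl
  intro p hp
  simp only [Finset.mem_filter, Finset.mem_univ, true_and] at hp
  rw [Equiv.Perm.mul_apply, Equiv.Perm.mul_apply]
  by_cases h1 : τ p.1 < τ p.2
  · rw [pairSort, if_pos h1]
    rw [if_neg (not_lt.mpr (le_of_lt h1)), mul_one]
  · have hne : τ p.1 ≠ τ p.2 := fun hc => absurd (τ.injective hc) (ne_of_lt hp)
    have h1' : τ p.2 < τ p.1 := lt_of_le_of_ne (not_lt.mp h1) hne.symm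
    rw [pairSort, if_neg h1, if_pos h1']
    by_cases h2 : σ (τ p.2) < σ (τ p.1)
    · rw [if_pos h2, if_neg (not_lt.mpr (le_of_lt h2)), one_mul]
    · have hne2 : σ (τ p.1) ≠ σ (τ p.2) := fun hc => absurd (σ.injective hc) (ne_of_lt h1').symm
      have h2' : σ (τ p.1) < σ (τ p.2) := lt_of_le_of_ne (not_lt.mp h2) hne2
      rw [if_neg h2, if_pos h2']
      have hvne : v (σ (τ p.1)) ≠ v (σ (τ p.2)) := fun hc =>
        absurd (hv hc) (ne_of_lt h2')
      rw [wfac_mul_inv hq hvne]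

variable {A : Type} [Ring A] [Algebra K A]

theorem piOp_piOp (hq : q ≠ 0) {k : ℕ} {v : Fin k → ι} (hv : Function.Injective v)
    (σ τ : Equiv.Perm (Fin k)) (G : AVal K ι A) :
    piOp K ι A q v hv σ (piOp K ι A q v hv τ G) = piOp K ι A q v hv (σ * τ) G := by
  simp only [piOp]
  rw [map_mul, renA_inF, renA_comp, ← mul_assoc, ← map_mul, ← qWeight_cocycle hq hv σ τ]
  congr 1
  apply renA_congr
  funext x
  exact extPerm_mul hv σ τ x

theorem piOp_one {k : ℕ} {v : Fin k → ι} (hv : Function.Injective v) (G : AVal K ι A) :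
    piOp K ι A q v hv 1 G = G := by
  simp only [piOp]
  have h1 : qWeight K ι q v (1 : Equiv.Perm (Fin k)) = 1 := by
    rw [qWeight]
    rw [Finset.filter_false_of_mem, Finset.prod_empty]
    rintro p _ ⟨hlt, hgt⟩
    simp only [Equiv.Perm.one_apply] at hgt
    exact absurd hlt (asymm hgt)
  rw [h1, map_one, one_mul]
  rw [renA_congr (Equiv.injective _) (fun a b h => h) (funext fun x => extPerm_one hv x)]
  exact renA_id (fun a b h => h) G

theorem qSym_piOp (hq : q ≠ 0) {k : ℕ} {v : Fin k → ι} (hv : Function.Injective v)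
    (τ : Equiv.Perm (Fin k)) (G : AVal K ι A) :
    qSym K ι A q v hv (piOp K ι A q v hv τ G) = qSym K ι A q v hv G := by
  simp only [qSym]
  congr 1
  calc ∑ σ : Equiv.Perm (Fin k), piOp K ι A q v hv σ (piOp K ι A q v hv τ G)
      = ∑ σ : Equiv.Perm (Fin k), piOp K ι A q v hv (σ * τ) G :=
        Finset.sum_congr rfl (fun σ _ => piOp_piOp hq hv σ τ G)
    _ = ∑ σ : Equiv.Perm (Fin k), piOp K ι A q v hv σ G :=
        Fintype.sum_equiv (Equiv.mulRight τ) _ _ (fun σ => rfl)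

end Cocycle
section Linearity

open Finset Equiv

variable {K : Type} [Field K] {ι : Type} {q : K} {A : Type} [Ring A] [Algebra K A]

theorem piOp_add {k : ℕ} {v : Fin k → ι} {hv : Function.Injective v} (σ : Equiv.Perm (Fin k))
    (x y : AVal K ι A) :
    piOp K ι A q v hv σ (x + y) = piOp K ι A q v hv σ x + piOp K ι A q v hv σ y := by
  simp only [piOp, map_add, mul_add]

theorem piOp_zero {k : ℕ} {v : Fin k → ι} {hv : Function.Injective v} (σ : Equiv.Perm (Fin k)) :
    piOp K ι A q v hv σ 0 = 0 := by
  simp only [piOp, map_zero, mul_zero]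

theorem piOp_smul {k : ℕ} {v : Fin k → ι} {hv : Function.Injective v} (σ : Equiv.Perm (Fin k))
    (c : K) (x : AVal K ι A) :
    piOp K ι A q v hv σ (c • x) = c • piOp K ι A q v hv σ x := by
  simp only [piOp, map_smul, mul_smul_comm]

theorem piOp_sum {k : ℕ} {v : Fin k → ι} {hv : Function.Injective v} (σ : Equiv.Perm (Fin k))
    {β : Type} (s : Finset β) (f : β → AVal K ι A) :
    piOp K ι A q v hv σ (∑ b ∈ s, f b) = ∑ b ∈ s, piOp K ι A q v hv σ (f b) := by
  simp only [piOp, map_sum, Finset.mul_sum]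

theorem qSym_add {k : ℕ} {v : Fin k → ι} {hv : Function.Injective v} (x y : AVal K ι A) :
    qSym K ι A q v hv (x + y) = qSym K ι A q v hv x + qSym K ι A q v hv y := by
  simp only [qSym, piOp_add, Finset.sum_add_distrib, smul_add]

theorem qSym_zero {k : ℕ} {v : Fin k → ι} {hv : Function.Injective v} :
    qSym K ι A q v hv 0 = 0 := by
  simp only [qSym, piOp_zero, Finset.sum_const_zero, smul_zero]

theorem qSym_smul {k : ℕ} {v : Fin k → ι} {hv : Function.Injective v} (c : K) (x : AVal K ι A) :
    qSym K ι A q v hv (c • x) = c • qSym K ι A q v hv x := by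
  simp only [qSym, piOp_smul, ← Finset.smul_sum, smul_comm ((k.factorial : K))⁻¹ c]

theorem qSym_sum {k : ℕ} {v : Fin k → ι} {hv : Function.Injective v}
    {β : Type} (s : Finset β) (f : β → AVal K ι A) :
    qSym K ι A q v hv (∑ b ∈ s, f b) = ∑ b ∈ s, qSym K ι A q v hv (f b) := by
  classical
  induction s using Finset.induction_on with
  | empty => simp [qSym_zero]
  | insert _ _ h ih => rw [Finset.sum_insert h, Finset.sum_insert h, qSym_add, ih]

end Linearity

section SymList

open Finset Equiv

variable {K : Type} [Field K] {A : Type} [Ring A] [Algebra K A]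

/-- Iterated `q`-symmetrization over a list of types. -/
def symList (q : K) (A : Type) [Ring A] [Algebra K A] (n : ℕ →₀ ℕ) :
    List ℕ → AVal K ιM A → AVal K ιM A
  | [], G => G
  | a :: L, G => qSym K ιM A q (vtype a (n a)) (vtype_inj a (n a)) (symList q A n L G)

variable {q : K}

theorem symM_eq_symList (n : ℕ →₀ ℕ) (G : AVal K ιM A) :
    symM K A q n G = symList q A n (n.support.sort (· ≤ ·)) G := by
  rw [symM]
  generalize (n.support.sort (· ≤ ·)) = L
  induction L with
  | nil => rfl
  | cons a L ih =>
    simp only [List.foldr_cons, Function.comp_apply, symList, ih]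

theorem symList_add (n : ℕ →₀ ℕ) (L : List ℕ) (x y : AVal K ιM A) :
    symList q A n L (x + y) = symList q A n L x + symList q A n L y := by
  induction L with
  | nil => rfl
  | cons a L ih => simp only [symList, ih, qSym_add]

theorem symList_zero (n : ℕ →₀ ℕ) (L : List ℕ) :
    symList q A n L (0 : AVal K ιM A) = 0 := by
  induction L with
  | nil => rfl
  | cons a L ih => simp only [symList, ih, qSym_zero]

theorem symList_smul (n : ℕ →₀ ℕ) (L : List ℕ) (c : K) (x : AVal K ιM A) :
    symList q A n L (c • x) = c • symList q A n L x := by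
  induction L with
  | nil => rfl
  | cons a L ih => simp only [symList, ih, qSym_smul]

theorem symList_sum (n : ℕ →₀ ℕ) (L : List ℕ) {β : Type} (s : Finset β)
    (f : β → AVal K ιM A) :
    symList q A n L (∑ b ∈ s, f b) = ∑ b ∈ s, symList q A n L (f b) := by
  classical
  induction s using Finset.induction_on with
  | empty => simp [symList_zero]
  | insert _ _ h ih => rw [Finset.sum_insert h, Finset.sum_insert h, symList_add, ih]

theorem symM_add (n : ℕ →₀ ℕ) (x y : AVal K ιM A) :
    symM K A q n (x + y) = symM K A q n x + symM K A q n y := by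
  simp only [symM_eq_symList, symList_add]

theorem symM_smul (n : ℕ →₀ ℕ) (c : K) (x : AVal K ιM A) :
    symM K A q n (c • x) = c • symM K A q n x := by
  simp only [symM_eq_symList, symList_smul]

theorem symM_sum (n : ℕ →₀ ℕ) {β : Type} (s : Finset β) (f : β → AVal K ιM A) :
    symM K A q n (∑ b ∈ s, f b) = ∑ b ∈ s, symM K A q n (f b) := by
  simp only [symM_eq_symList, symList_sum]

end SymList

section Comm

open Finset Equiv

variable {K : Type} [Field K] {q : K} {A : Type} [Ring A] [Algebra K A]

theorem mem_range_vtype (a m : ℕ) (x : ιM) :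
    x ∈ Set.range (vtype a m) ↔ x.1 = a ∧ x.2 < m := by
  constructor
  · rintro ⟨i, rfl⟩; exact ⟨rfl, i.2⟩
  · rintro ⟨h1, h2⟩
    exact ⟨⟨x.2, h2⟩, by rw [vtype]; exact Prod.ext h1.symm rfl⟩

theorem extPerm_vtype_fix {a m : ℕ} (σ : Equiv.Perm (Fin m)) {x : ιM} (hx : x.1 ≠ a) :
    extPerm ιM (vtype a m) (vtype_inj a m) σ x = x := by
  apply extPerm_apply_not_mem
  rw [mem_range_vtype]
  exact fun hc => hx hc.1

theorem extPerm_vtype_fst {a m : ℕ} (σ : Equiv.Perm (Fin m)) (x : ιM) :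
    (extPerm ιM (vtype a m) (vtype_inj a m) σ x).1 = x.1 := by
  by_cases hx : x ∈ Set.range (vtype a m)
  · obtain ⟨i, rfl⟩ := hx
    rw [extPerm_apply_v (vtype_inj a m) σ i]
    rfl
  · rw [extPerm_apply_not_mem (vtype_inj a m) σ hx]

theorem renHom_qWeight_fix {ι : Type} {k : ℕ} {v : Fin k → ι} (σ : Equiv.Perm (Fin k))
    (f : ι → ι) (hf : Function.Injective f) (hfix : ∀ i, f (v i) = v i) :
    renHom K ι f hf (qWeight K ι q v σ) = qWeight K ι q v σ := by
  rw [qWeight, map_prod]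
  apply Finset.prod_congr rfl
  intro p _
  rw [renHom_wfac, hfix, hfix]

theorem extPerm_vtype_comm {a b : ℕ} (hab : a ≠ b) {j k : ℕ}
    (τ : Equiv.Perm (Fin j)) (σ : Equiv.Perm (Fin k)) (x : ιM) :
    extPerm ιM (vtype a j) (vtype_inj a j) τ (extPerm ιM (vtype b k) (vtype_inj b k) σ x)
      = extPerm ιM (vtype b k) (vtype_inj b k) σ
          (extPerm ιM (vtype a j) (vtype_inj a j) τ x) := by
  by_cases hxa : x ∈ Set.range (vtype a j)
  · obtain ⟨i, rfl⟩ := hxa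
    rw [extPerm_vtype_fix σ (show (vtype a j i).1 ≠ b from hab),
      extPerm_apply_v (vtype_inj a j) τ i,
      extPerm_vtype_fix σ (show (vtype a j (τ i)).1 ≠ b from hab)]
  · rw [extPerm_apply_not_mem (vtype_inj a j) τ hxa]
    by_cases hxb : x ∈ Set.range (vtype b k)
    · obtain ⟨i, rfl⟩ := hxb
      rw [extPerm_apply_v (vtype_inj b k) σ i,
        extPerm_apply_not_mem (vtype_inj a j) τ]
      rw [mem_range_vtype]
      exact fun hc => hab hc.1.symm
    · rw [extPerm_apply_not_mem (vtype_inj b k) σ hxb,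
        extPerm_apply_not_mem (vtype_inj a j) τ hxa]

theorem piOp_vtype_comm {a b : ℕ} (hab : a ≠ b) {j k : ℕ}
    (τ : Equiv.Perm (Fin j)) (σ : Equiv.Perm (Fin k)) (G : AVal K ιM A) :
    piOp K ιM A q (vtype a j) (vtype_inj a j) τ
        (piOp K ιM A q (vtype b k) (vtype_inj b k) σ G)
      = piOp K ιM A q (vtype b k) (vtype_inj b k) σ
          (piOp K ιM A q (vtype a j) (vtype_inj a j) τ G) := by
  simp only [piOp]
  rw [map_mul, map_mul, renA_inF, renA_inF, renA_comp, renA_comp]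
  rw [renHom_qWeight_fix σ _ _ (fun i => extPerm_vtype_fix τ (show (vtype b k i).1 ≠ a from hab.symm))]
  rw [renHom_qWeight_fix τ _ _ (fun i => extPerm_vtype_fix σ (show (vtype a j i).1 ≠ b from hab))]
  rw [renA_congr ((Equiv.injective _).comp (Equiv.injective _))
    ((Equiv.injective _).comp (Equiv.injective _))
    (funext (extPerm_vtype_comm hab τ σ))]
  rw [← mul_assoc, ← mul_assoc, ← map_mul, ← map_mul,
    mul_comm (qWeight K ιM q (vtype a j) τ) (qWeight K ιM q (vtype b k) σ)]

theorem qSym_piOp_comm {a b : ℕ} (hab : a ≠ b) {j k : ℕ}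
    (τ : Equiv.Perm (Fin j)) (G : AVal K ιM A) :
    qSym K ιM A q (vtype b k) (vtype_inj b k)
        (piOp K ιM A q (vtype a j) (vtype_inj a j) τ G)
      = piOp K ιM A q (vtype a j) (vtype_inj a j) τ
          (qSym K ιM A q (vtype b k) (vtype_inj b k) G) := by
  simp only [qSym]
  rw [piOp_smul, piOp_sum]
  congr 1
  apply Finset.sum_congr rfl
  intro σ _
  exact (piOp_vtype_comm hab τ σ G).symm

theorem symList_piOp_comm (n : ℕ →₀ ℕ) (L : List ℕ) {a : ℕ} (ha : a ∉ L) {m : ℕ}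
    (τ : Equiv.Perm (Fin m)) (G : AVal K ιM A) :
    symList q A n L (piOp K ιM A q (vtype a m) (vtype_inj a m) τ G)
      = piOp K ιM A q (vtype a m) (vtype_inj a m) τ (symList q A n L G) := by
  induction L with
  | nil => rfl
  | cons b L ih =>
    have hab : a ≠ b := fun hc => ha (hc ▸ (List.mem_cons_self (a := b) (l := L)))
    simp only [symList, ih (fun hc => ha (List.mem_cons_of_mem b hc))]
    exact qSym_piOp_comm hab τ _

theorem symList_absorb (hq : q ≠ 0) (n : ℕ →₀ ℕ) (L : List ℕ) (hnd : L.Nodup) {a : ℕ}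
    (ha : a ∈ L) (τ : Equiv.Perm (Fin (n a))) (G : AVal K ιM A) :
    symList q A n L (piOp K ιM A q (vtype a (n a)) (vtype_inj a (n a)) τ G)
      = symList q A n L G := by
  induction L with
  | nil => cases ha
  | cons b L ih =>
    rcases List.mem_cons.mp ha with hba | haL
    · subst hba
      have haL : a ∉ L := (List.nodup_cons.mp hnd).1
      simp only [symList]
      rw [symList_piOp_comm n L haL τ G]
      exact qSym_piOp hq (vtype_inj a (n a)) τ _
    · simp only [symList]
      rw [ih (List.nodup_cons.mp hnd).2 haL]

theorem symM_absorb (hq : q ≠ 0) (n : ℕ →₀ ℕ) {a : ℕ} (ha : n a ≠ 0)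
    (τ : Equiv.Perm (Fin (n a))) (G : AVal K ιM A) :
    symM K A q n (piOp K ιM A q (vtype a (n a)) (vtype_inj a (n a)) τ G) = symM K A q n G := by
  rw [symM_eq_symList, symM_eq_symList]
  apply symList_absorb hq n _ (Finset.sort_nodup _ _)
    (by rw [Finset.mem_sort]; exact Finsupp.mem_support_iff.mpr ha) τ G

end Comm
section Embed

open Finset Equiv

variable {K : Type} [Field K] {q : K} {A : Type} [Ring A] [Algebra K A]

/-- The window `[c, c+m)` inside `Fin n`, identified with `Fin m`. -/
def embedEquiv (c m n : ℕ) (h : c + m ≤ n) :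
    Fin m ≃ {i : Fin n // c ≤ (i : ℕ) ∧ (i : ℕ) < c + m} where
  toFun i := ⟨⟨c + (i : ℕ), by have := i.isLt; omega⟩,
    ⟨Nat.le_add_right c (i : ℕ), Nat.add_lt_add_left i.isLt c⟩⟩
  invFun i := ⟨(i.1 : ℕ) - c, by have := i.2; omega⟩
  left_inv i := by apply Fin.ext; show c + (i : ℕ) - c = (i : ℕ); omega
  right_inv i := by
    apply Subtype.ext; apply Fin.ext
    show c + ((i.1 : ℕ) - c) = (i.1 : ℕ)
    have := i.2; omega

/-- Embedding of `Perm (Fin m)` into `Perm (Fin n)`, acting on the window `[c, c+m)`. -/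
def embedPerm (c m n : ℕ) (h : c + m ≤ n) (σ : Equiv.Perm (Fin m)) : Equiv.Perm (Fin n) :=
  letI : DecidablePred (fun i : Fin n => c ≤ (i : ℕ) ∧ (i : ℕ) < c + m) :=
    fun i => instDecidableAnd
  σ.extendDomain (embedEquiv c m n h)

theorem embedPerm_apply_in (c m n : ℕ) (h : c + m ≤ n) (σ : Equiv.Perm (Fin m)) (i : Fin m) :
    embedPerm c m n h σ ⟨c + (i : ℕ), by have := i.isLt; omega⟩
      = ⟨c + (σ i : ℕ), by have := (σ i).isLt; omega⟩ := by
  letI : DecidablePred (fun i : Fin n => c ≤ (i : ℕ) ∧ (i : ℕ) < c + m) :=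
    fun i => instDecidableAnd
  exact Equiv.Perm.extendDomain_apply_image σ (embedEquiv c m n h) i

theorem embedPerm_apply_out (c m n : ℕ) (h : c + m ≤ n) (σ : Equiv.Perm (Fin m)) (j : Fin n)
    (hj : (j : ℕ) < c ∨ c + m ≤ (j : ℕ)) : embedPerm c m n h σ j = j := by
  letI : DecidablePred (fun i : Fin n => c ≤ (i : ℕ) ∧ (i : ℕ) < c + m) :=
    fun i => instDecidableAnd
  exact Equiv.Perm.extendDomain_apply_not_subtype σ (embedEquiv c m n h) (by omega)

theorem embedPerm_val_in (c m n : ℕ) (h : c + m ≤ n) (σ : Equiv.Perm (Fin m)) (j : Fin n)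
    (hj : c ≤ (j : ℕ) ∧ (j : ℕ) < c + m) :
    (embedPerm c m n h σ j : ℕ) = c + (σ ⟨(j : ℕ) - c, by omega⟩ : ℕ) := by
  have e : j = ⟨c + ((⟨(j : ℕ) - c, by omega⟩ : Fin m) : ℕ), by omega⟩ := by
    apply Fin.ext; show (j : ℕ) = c + ((j : ℕ) - c); omega
  conv_lhs => rw [e, embedPerm_apply_in]

/-- Transfer of a `q`-weight under a shift of the variables. -/
theorem qWeight_embed {a m : ℕ} (σ : Equiv.Perm (Fin m)) (c n' : ℕ) (h : c + m ≤ n') :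
    qWeight K ιM q (vtype a n') (embedPerm c m n' h σ)
      = ∏ p ∈ Finset.univ.filter (fun p : Fin m × Fin m => p.1 < p.2 ∧ σ p.2 < σ p.1),
          wfac K ιM q (a, c + (σ p.2 : ℕ)) (a, c + (σ p.1 : ℕ)) := by
  rw [qWeight]
  have key : ∀ P : Fin n' × Fin n',
      (P.1 < P.2 ∧ embedPerm c m n' h σ P.2 < embedPerm c m n' h σ P.1) →
        (c ≤ (P.1 : ℕ) ∧ (P.1 : ℕ) < c + m) ∧ (c ≤ (P.2 : ℕ) ∧ (P.2 : ℕ) < c + m) := by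
    rintro P ⟨h1, h2⟩
    rw [Fin.lt_def] at h1 h2
    by_cases w1 : c ≤ (P.1 : ℕ) ∧ (P.1 : ℕ) < c + m <;>
      by_cases w2 : c ≤ (P.2 : ℕ) ∧ (P.2 : ℕ) < c + m
    · exact ⟨w1, w2⟩
    · have v2 : embedPerm c m n' h σ P.2 = P.2 := embedPerm_apply_out c m n' h σ P.2 (by omega)
      have v1 := embedPerm_val_in c m n' h σ P.1 w1
      have hlt := (σ ⟨(P.1 : ℕ) - c, by omega⟩).isLt
      rw [v2, v1] at h2
      omega
    · have v1 : embedPerm c m n' h σ P.1 = P.1 := embedPerm_apply_out c m n' h σ P.1 (by omega)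
      have v2 := embedPerm_val_in c m n' h σ P.2 w2
      have hlt := (σ ⟨(P.2 : ℕ) - c, by omega⟩).isLt
      rw [v1, v2] at h2
      omega
    · have v1 : embedPerm c m n' h σ P.1 = P.1 := embedPerm_apply_out c m n' h σ P.1 (by omega)
      have v2 : embedPerm c m n' h σ P.2 = P.2 := embedPerm_apply_out c m n' h σ P.2 (by omega)
      rw [v1, v2] at h2
      omega
  symm
  apply Finset.prod_bij (fun (p : Fin m × Fin m) _ =>
    ((⟨c + (p.1 : ℕ), by have := p.1.isLt; omega⟩ : Fin n'),
      (⟨c + (p.2 : ℕ), by have := p.2.isLt; omega⟩ : Fin n')))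
  · -- maps into the big filter
    intro p hp
    simp only [Finset.mem_filter, Finset.mem_univ, true_and] at hp ⊢
    obtain ⟨h1, h2⟩ := hp
    rw [Fin.lt_def] at h1 h2
    have hv1 : (embedPerm c m n' h σ (⟨c + (p.1 : ℕ), by have := p.1.isLt; omega⟩ : Fin n') : ℕ)
        = c + (σ p.1 : ℕ) := by
      rw [embedPerm_val_in c m n' h σ _ (by
        constructor
        · show c ≤ c + (p.1 : ℕ); omega
        · show c + (p.1 : ℕ) < c + m; have := p.1.isLt; omega)]
      have e : (⟨((⟨c + (p.1 : ℕ), by have := p.1.isLt; omega⟩ : Fin n') : ℕ) - c,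
          by show c + (p.1 : ℕ) - c < m; have := p.1.isLt; omega⟩ : Fin m) = p.1 := by
        apply Fin.ext
        show c + (p.1 : ℕ) - c = (p.1 : ℕ)
        omega
      rw [e]
    have hv2 : (embedPerm c m n' h σ (⟨c + (p.2 : ℕ), by have := p.2.isLt; omega⟩ : Fin n') : ℕ)
        = c + (σ p.2 : ℕ) := by
      rw [embedPerm_val_in c m n' h σ _ (by
        constructor
        · show c ≤ c + (p.2 : ℕ); omega
        · show c + (p.2 : ℕ) < c + m; have := p.2.isLt; omega)]
      have e : (⟨((⟨c + (p.2 : ℕ), by have := p.2.isLt; omega⟩ : Fin n') : ℕ) - c,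
          by show c + (p.2 : ℕ) - c < m; have := p.2.isLt; omega⟩ : Fin m) = p.2 := by
        apply Fin.ext
        show c + (p.2 : ℕ) - c = (p.2 : ℕ)
        omega
      rw [e]
    constructor
    · rw [Fin.lt_def]
      show c + (p.1 : ℕ) < c + (p.2 : ℕ)
      omega
    · rw [Fin.lt_def, hv1, hv2]
      omega
  · -- injective
    intro p1 _ p2 _ he
    have h1 := congrArg (fun P : Fin n' × Fin n' => (P.1 : ℕ)) he
    have h2 := congrArg (fun P : Fin n' × Fin n' => (P.2 : ℕ)) he
    simp only at h1 h2
    apply Prod.ext <;> apply Fin.ext <;> omega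
  · -- surjective
    intro P hP
    simp only [Finset.mem_filter, Finset.mem_univ, true_and] at hP
    obtain ⟨hw1, hw2⟩ := key P hP
    obtain ⟨h1, h2⟩ := hP
    rw [Fin.lt_def] at h1 h2
    have v1 := embedPerm_val_in c m n' h σ P.1 hw1
    have v2 := embedPerm_val_in c m n' h σ P.2 hw2
    have hp1 : ((P.1 : ℕ) - c) < m := by omega
    have hp2 : ((P.2 : ℕ) - c) < m := by omega
    refine ⟨(⟨(P.1 : ℕ) - c, hp1⟩, ⟨(P.2 : ℕ) - c, hp2⟩), ?_, ?_⟩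
    · simp only [Finset.mem_filter, Finset.mem_univ, true_and]
      constructor
      · show (⟨(P.1 : ℕ) - c, hp1⟩ : Fin m) < ⟨(P.2 : ℕ) - c, hp2⟩
        rw [Fin.lt_def]
        show (P.1 : ℕ) - c < (P.2 : ℕ) - c
        omega
      · show σ ⟨(P.2 : ℕ) - c, hp2⟩ < σ ⟨(P.1 : ℕ) - c, hp1⟩
        rw [Fin.lt_def]
        rw [v1, v2] at h2
        have h2' : c + (σ ⟨(P.2 : ℕ) - c, hp2⟩ : ℕ) < c + (σ ⟨(P.1 : ℕ) - c, hp1⟩ : ℕ) := h2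
        omega
    · apply Prod.ext
      · apply Fin.ext
        show c + ((P.1 : ℕ) - c) = (P.1 : ℕ)
        omega
      · apply Fin.ext
        show c + ((P.2 : ℕ) - c) = (P.2 : ℕ)
        omega
  · -- factors agree
    intro p hp
    simp only [Finset.mem_filter, Finset.mem_univ, true_and] at hp
    show wfac K ιM q (a, c + (σ p.2 : ℕ)) (a, c + (σ p.1 : ℕ))
      = wfac K ιM q (vtype a n' (embedPerm c m n' h σ _)) (vtype a n' (embedPerm c m n' h σ _))
    rw [embedPerm_apply_in c m n' h σ p.2, embedPerm_apply_in c m n' h σ p.1]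
    rfl

theorem renHom_shift_qWeight {a m : ℕ} (σ : Equiv.Perm (Fin m)) (g : ℕ → ℕ) (n' : ℕ)
    (h : g a + m ≤ n') :
    renHom K ιM (shiftFun g) (shiftFun_inj g) (qWeight K ιM q (vtype a m) σ)
      = qWeight K ιM q (vtype a n') (embedPerm (g a) m n' h σ) := by
  rw [qWeight, map_prod, qWeight_embed σ (g a) n' h]
  apply Finset.prod_congr rfl
  intro p _
  rw [renHom_wfac]
  show wfac K ιM q (a, (σ p.2 : ℕ) + g a) (a, (σ p.1 : ℕ) + g a) = _
  rw [Nat.add_comm (g a) (σ p.2 : ℕ), Nat.add_comm (g a) (σ p.1 : ℕ)]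

theorem shiftFun_zero : shiftFun (fun _ => 0) = id := funext fun x => by simp [shiftFun]

theorem qWeight_embed_zero {a k : ℕ} (σ : Equiv.Perm (Fin k)) (n' : ℕ) (h : 0 + k ≤ n') :
    qWeight K ιM q (vtype a k) σ = qWeight K ιM q (vtype a n') (embedPerm 0 k n' h σ) := by
  have h' : (fun _ : ℕ => 0) a + k ≤ n' := h
  rw [← renHom_shift_qWeight σ (fun _ => 0) n' h']
  rw [renHom_congr (shiftFun_inj _) (fun a b hh => hh) shiftFun_zero]
  exact (renHom_id (fun a b hh => hh) _).symm

/-- Conjugation of an extended permutation by a shift. -/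
theorem shift_extPerm (a m : ℕ) (σ : Equiv.Perm (Fin m)) (g : ℕ → ℕ) (n' : ℕ)
    (h : g a + m ≤ n') (x : ιM) :
    shiftFun g (extPerm ιM (vtype a m) (vtype_inj a m) σ x)
      = extPerm ιM (vtype a n') (vtype_inj a n') (embedPerm (g a) m n' h σ) (shiftFun g x) := by
  obtain ⟨b, i⟩ := x
  by_cases hb : b = a
  · subst hb
    by_cases him : i < m
    · have hL : shiftFun g (extPerm ιM (vtype b m) (vtype_inj b m) σ ((b, i) : ιM))
          = ((b, (σ ⟨i, him⟩ : ℕ) + g b) : ιM) := by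
        rw [show ((b, i) : ιM) = vtype b m ⟨i, him⟩ from rfl, extPerm_apply_v]
        rfl
      have hR : extPerm ιM (vtype b n') (vtype_inj b n') (embedPerm (g b) m n' h σ)
            (shiftFun g ((b, i) : ιM))
          = ((b, (embedPerm (g b) m n' h σ ⟨i + g b, by omega⟩ : ℕ)) : ιM) := by
        rw [show shiftFun g ((b, i) : ιM) = vtype b n' ⟨i + g b, by omega⟩ from rfl,
          extPerm_apply_v]
        rfl
      rw [hL, hR]
      have hval : (embedPerm (g b) m n' h σ ⟨i + g b, by omega⟩ : ℕ)
          = g b + (σ ⟨i + g b - g b, by omega⟩ : ℕ) :=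
        embedPerm_val_in (g b) m n' h σ _ (by
          constructor
          · show g b ≤ i + g b; omega
          · show i + g b < g b + m; omega)
      have harg : (⟨i + g b - g b, by omega⟩ : Fin m) = ⟨i, him⟩ := by
        apply Fin.ext; show i + g b - g b = i; omega
      rw [harg] at hval
      rw [hval]
      exact Prod.ext rfl (by omega)
    · have hL : extPerm ιM (vtype b m) (vtype_inj b m) σ ((b, i) : ιM) = ((b, i) : ιM) :=
        extPerm_apply_not_mem (vtype_inj b m) σ
          (by rw [mem_range_vtype]; exact fun hc => him hc.2)
      rw [hL]
      by_cases hn : i + g b < n'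
      · have hR : extPerm ιM (vtype b n') (vtype_inj b n') (embedPerm (g b) m n' h σ)
              (shiftFun g ((b, i) : ιM))
            = ((b, (embedPerm (g b) m n' h σ ⟨i + g b, hn⟩ : ℕ)) : ιM) := by
          rw [show shiftFun g ((b, i) : ιM) = vtype b n' ⟨i + g b, hn⟩ from rfl,
            extPerm_apply_v]
          rfl
        rw [hR, embedPerm_apply_out (g b) m n' h σ _ (by right; show g b + m ≤ i + g b; omega)]
        rfl
      · rw [extPerm_apply_not_mem (vtype_inj b n') _
          (by rw [mem_range_vtype]; exact fun hc => hn hc.2)]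
  · rw [extPerm_vtype_fix σ (show ((b, i) : ιM).1 ≠ a from hb),
      extPerm_vtype_fix _ (show (shiftFun g ((b, i) : ιM)).1 ≠ a from hb)]

theorem extPerm_embed_fix {a c m n' : ℕ} (h : c + m ≤ n') (σ : Equiv.Perm (Fin m)) {x : ιM}
    (hx : x.1 ≠ a ∨ x.2 < c ∨ c + m ≤ x.2) :
    extPerm ιM (vtype a n') (vtype_inj a n') (embedPerm c m n' h σ) x = x := by
  rcases hx with hx | hx
  · exact extPerm_vtype_fix _ hx
  · by_cases hr : x ∈ Set.range (vtype a n')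
    · obtain ⟨i, rfl⟩ := hr
      rw [extPerm_apply_v]
      rw [embedPerm_apply_out c m n' h σ i hx]
    · exact extPerm_apply_not_mem _ _ hr

end Embed
section ZserLemmas

open Finset

variable {K : Type} [Field K] {q : K} {A : Type} [Ring A] [Algebra K A]

/-- A single factor of the rational series `Z`. -/
def zfac (K : Type) [Field K] (q : K) (i j : ιM) : RatF K ιM :=
  (cst K ιM q - cst K ιM q⁻¹ * (tvar K ιM i / tvar K ιM j)) /
    (1 - tvar K ιM i / tvar K ιM j)

theorem Zser_eq (N : ℕ) (s n : ℕ →₀ ℕ) :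
    Zser K q N s n = ∏ b ∈ Finset.range (N - 2), ∏ l ∈ Finset.Ico (s b) (n b),
      ∏ l' ∈ Finset.range (s (b + 1)), zfac K q (b, l) (b + 1, l') := rfl

theorem renHom_zfac (f : ιM → ιM) (hf : Function.Injective f) (i j : ιM) :
    renHom K ιM f hf (zfac K q i j) = zfac K q (f i) (f j) := by
  rw [zfac, zfac, map_div₀, map_sub, map_sub, map_mul, map_one,
    renHom_cst, renHom_cst, map_div₀, renHom_tvar, renHom_tvar]

theorem prod_perm_finset {M : Type} [CommMonoid M] (g : ℕ → M) (t : Finset ℕ) (fa : ℕ → ℕ)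
    (hinj : Function.Injective fa) (hmap : ∀ j ∈ t, fa j ∈ t) :
    ∏ l ∈ t, g (fa l) = ∏ l ∈ t, g l := by
  apply Finset.prod_bij (fun l (_ : l ∈ t) => fa l) hmap
    (fun l1 _ l2 _ hh => hinj hh)
  · intro b hb
    obtain ⟨a2, ha2, he⟩ := Finset.surj_on_of_inj_on_of_card_le (fun l (_ : l ∈ t) => fa l)
      hmap (fun l1 l2 h1 h2 hh => hinj hh) le_rfl b hb
    exact ⟨a2, ha2, he.symm⟩
  · intro l _
    rfl

theorem renHom_Zser_fix (N : ℕ) (s n : ℕ →₀ ℕ) (f : ιM → ιM) (hf : Function.Injective f)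
    (a : ℕ)
    (hty : ∀ x : ιM, x.1 ≠ a → f x = x)
    (hfst : ∀ j : ℕ, (f (a, j)).1 = a)
    (hmap1 : ∀ j ∈ Finset.Ico (s a) (n a), (f ((a, j) : ιM)).2 ∈ Finset.Ico (s a) (n a))
    (hmap2 : ∀ j ∈ Finset.range (s a), (f ((a, j) : ιM)).2 ∈ Finset.range (s a)) :
    renHom K ιM f hf (Zser K q N s n) = Zser K q N s n := by
  have hinj : Function.Injective (fun j : ℕ => (f ((a, j) : ιM)).2) := by
    intro j1 j2 hh
    have he : f ((a, j1) : ιM) = f ((a, j2) : ιM) := Prod.ext ((hfst j1).trans (hfst j2).symm) hh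
    exact congrArg Prod.snd (hf he)
  have hfa : ∀ j : ℕ, f ((a, j) : ιM) = ((a, (f ((a, j) : ιM)).2) : ιM) := fun j =>
    Prod.ext (hfst j) rfl
  rw [Zser_eq, map_prod]
  apply Finset.prod_congr rfl
  intro b _
  rw [map_prod]
  by_cases hba : b = a
  · subst hba
    have inner : ∀ l : ℕ,
        renHom K ιM f hf (∏ l' ∈ Finset.range (s (b + 1)), zfac K q (b, l) (b + 1, l'))
          = ∏ l' ∈ Finset.range (s (b + 1)), zfac K q (b, (f ((b, l) : ιM)).2) (b + 1, l') := by
      intro l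
      rw [map_prod]
      apply Finset.prod_congr rfl
      intro l' _
      rw [renHom_zfac, hty ((b + 1, l') : ιM) (Nat.succ_ne_self b)]
      rw [hfa l]
    rw [Finset.prod_congr rfl (fun l _ => inner l)]
    exact prod_perm_finset
      (fun l => ∏ l' ∈ Finset.range (s (b + 1)), zfac K q (b, l) (b + 1, l'))
      (Finset.Ico (s b) (n b)) _ hinj hmap1
  · have hfirst : ∀ l : ℕ, f ((b, l) : ιM) = ((b, l) : ιM) := fun l => hty _ hba
    by_cases hb1 : b + 1 = a
    · subst hb1
      -- b = a - 1; the inner products over `range (s (b+1))` get permuted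
      apply Finset.prod_congr rfl
      intro l _
      rw [map_prod]
      have inner : ∀ l' : ℕ,
          renHom K ιM f hf (zfac K q (b, l) (b + 1, l'))
            = zfac K q (b, l) (b + 1, (f ((b + 1, l') : ιM)).2) := by
        intro l'
        rw [renHom_zfac, hfirst l, hfa l']
      rw [Finset.prod_congr rfl (fun l' _ => inner l')]
      exact prod_perm_finset (fun l' => zfac K q (b, l) (b + 1, l'))
        (Finset.range (s (b + 1))) _ hinj hmap2
    · apply Finset.prod_congr rfl
      intro l _
      rw [map_prod]
      apply Finset.prod_congr rfl
      intro l' _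
      rw [renHom_zfac, hfirst l, hty ((b + 1, l') : ιM) hb1]

/-- `Z`-invariance under an embedded window permutation of the type-`a` variables. -/
theorem Zser_ren_embed (N : ℕ) (s n : ℕ →₀ ℕ) (a c m : ℕ) (h : c + m ≤ n a)
    (hsn : s a ≤ n a) (hwin : c + m ≤ s a ∨ s a ≤ c) (σ : Equiv.Perm (Fin m)) :
    renHom K ιM (extPerm ιM (vtype a (n a)) (vtype_inj a (n a)) (embedPerm c m (n a) h σ))
      (Equiv.injective _) (Zser K q N s n) = Zser K q N s n := by
  set E := extPerm ιM (vtype a (n a)) (vtype_inj a (n a)) (embedPerm c m (n a) h σ) with hE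
  have hval : ∀ j : ℕ, (hw : c ≤ j ∧ j < c + m) → (hja : j < n a) →
      c ≤ (E ((a, j) : ιM)).2 ∧ (E ((a, j) : ιM)).2 < c + m := by
    intro j hw hja
    have hEe : E ((a, j) : ιM) = vtype a (n a) (embedPerm c m (n a) h σ ⟨j, hja⟩) := by
      rw [hE, show ((a, j) : ιM) = vtype a (n a) ⟨j, hja⟩ from rfl]
      exact extPerm_apply_v (vtype_inj a (n a)) _ _
    have hv : ((E ((a, j) : ιM)).2 : ℕ) = c + (σ (⟨j - c, by omega⟩ : Fin m) : ℕ) := by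
      rw [hEe]
      show (embedPerm c m (n a) h σ ⟨j, hja⟩ : ℕ) = _
      rw [embedPerm_val_in c m (n a) h σ ⟨j, hja⟩ hw]
    have hlt := (σ (⟨j - c, by omega⟩ : Fin m)).isLt
    omega
  have hfix : ∀ j : ℕ, ¬(c ≤ j ∧ j < c + m) → E ((a, j) : ιM) = ((a, j) : ιM) := fun j hw => by
    rw [hE]
    exact extPerm_embed_fix h σ (Or.inr (by omega))
  apply renHom_Zser_fix N s n _ _ a
  · exact fun x hx => by rw [hE]; exact extPerm_vtype_fix _ hx
  · exact fun j => by rw [hE]; exact extPerm_vtype_fst _ _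
  · intro j hj
    rw [Finset.mem_Ico] at hj ⊢
    by_cases hw : c ≤ j ∧ j < c + m
    · rcases hwin with hwin | hwin
      · omega
      · have := hval j hw (by omega)
        omega
    · rw [hfix j hw]
      exact hj
  · intro j hj
    rw [Finset.mem_range] at hj ⊢
    by_cases hw : c ≤ j ∧ j < c + m
    · rcases hwin with hwin | hwin
      · have := hval j hw (by omega)
        omega
      · omega
    · rw [hfix j hw]
      exact hj

/-- The cocycle identity for the rational series `Z`. -/
theorem Zser_cocycle (N : ℕ) (s r n : ℕ →₀ ℕ) (hsr : ∀ b, s b + r b ≤ n b) :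
    Zser K q N s n * renHom K ιM (shiftFun (s ·)) (shiftFun_inj _) (Zser K q N r (n - s))
      = Zser K q N (s + r) n * Zser K q N s (s + r) := by
  rw [Zser_eq, Zser_eq, Zser_eq, Zser_eq, map_prod, ← Finset.prod_mul_distrib,
    ← Finset.prod_mul_distrib]
  apply Finset.prod_congr rfl
  intro b _
  rw [map_prod]
  have hb1 := hsr b
  have hb2 := hsr (b + 1)
  have hsub : (n - s) b = n b - s b := Finsupp.tsub_apply n s b
  have hadd : (s + r) b = s b + r b := Finsupp.add_apply s r b
  have hadd1 : (s + r) (b + 1) = s (b + 1) + r (b + 1) := Finsupp.add_apply s r (b + 1)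
  -- rewrite the shifted factor
  have hshift : (∏ l ∈ Finset.Ico (r b) ((n - s) b),
        renHom K ιM (shiftFun (s ·)) (shiftFun_inj _)
          (∏ l' ∈ Finset.range (r (b + 1)), zfac K q (b, l) (b + 1, l')))
      = ∏ l ∈ Finset.Ico (s b + r b) (n b),
          ∏ l' ∈ Finset.Ico (s (b + 1)) (s (b + 1) + r (b + 1)), zfac K q (b, l) (b + 1, l') := by
    have e1 : ∀ l : ℕ, renHom K ιM (shiftFun (s ·)) (shiftFun_inj _)
          (∏ l' ∈ Finset.range (r (b + 1)), zfac K q (b, l) (b + 1, l'))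
        = ∏ l' ∈ Finset.Ico (s (b + 1)) (s (b + 1) + r (b + 1)),
            zfac K q (b, l + s b) (b + 1, l') := by
      intro l
      rw [map_prod]
      have e0 : ∀ l' : ℕ, renHom K ιM (shiftFun (s ·)) (shiftFun_inj _)
            (zfac K q (b, l) (b + 1, l'))
          = zfac K q (b, l + s b) (b + 1, l' + s (b + 1)) := by
        intro l'
        rw [renHom_zfac]
        rfl
      rw [Finset.prod_congr rfl (fun l' _ => e0 l')]
      rw [show Finset.range (r (b + 1)) = Finset.Ico 0 (r (b + 1)) from
        (Nat.Ico_zero_eq_range _).symm]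
      rw [Finset.prod_Ico_add' (fun l' => zfac K q (b, l + s b) (b + 1, l')) 0 (r (b + 1))
        (s (b + 1))]
      rw [show Finset.Ico (0 + s (b + 1)) (r (b + 1) + s (b + 1))
        = Finset.Ico (s (b + 1)) (s (b + 1) + r (b + 1)) by congr 1 <;> omega]
    rw [Finset.prod_congr rfl (fun l _ => e1 l), hsub]
    rw [Finset.prod_Ico_add' (fun l => ∏ l' ∈ Finset.Ico (s (b + 1)) (s (b + 1) + r (b + 1)),
      zfac K q (b, l) (b + 1, l')) (r b) (n b - s b) (s b)]
    rw [show Finset.Ico (r b + s b) (n b - s b + s b) = Finset.Ico (s b + r b) (n b) by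
      congr 1 <;> omega]
  rw [hshift, hadd, hadd1]
  -- split products and rearrange
  set F : ℕ → ℕ → RatF K ιM := fun l l' => zfac K q (b, l) (b + 1, l') with hF
  have split1 : (∏ l ∈ Finset.Ico (s b) (n b), ∏ l' ∈ Finset.range (s (b + 1)), F l l')
      = (∏ l ∈ Finset.Ico (s b) (s b + r b), ∏ l' ∈ Finset.range (s (b + 1)), F l l')
        * ∏ l ∈ Finset.Ico (s b + r b) (n b), ∏ l' ∈ Finset.range (s (b + 1)), F l l' :=
    (Finset.prod_Ico_consecutive _ (by omega) (by omega)).symm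
  have split2 : (∏ l ∈ Finset.Ico (s b + r b) (n b),
        ∏ l' ∈ Finset.range (s (b + 1) + r (b + 1)), F l l')
      = (∏ l ∈ Finset.Ico (s b + r b) (n b), ∏ l' ∈ Finset.range (s (b + 1)), F l l')
        * ∏ l ∈ Finset.Ico (s b + r b) (n b),
            ∏ l' ∈ Finset.Ico (s (b + 1)) (s (b + 1) + r (b + 1)), F l l' := by
    rw [← Finset.prod_mul_distrib]
    apply Finset.prod_congr rfl
    intro l _
    rw [show (Finset.range (s (b + 1))) = Finset.Ico 0 (s (b + 1)) from
        (Nat.Ico_zero_eq_range _).symm,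
      show (Finset.range (s (b + 1) + r (b + 1))) = Finset.Ico 0 (s (b + 1) + r (b + 1)) from
        (Nat.Ico_zero_eq_range _).symm]
    exact (Finset.prod_Ico_consecutive _ (by omega) (by omega)).symm
  rw [split1, split2]
  ring

end ZserLemmas
section Absorb

open Finset Equiv

variable {K : Type} [Field K] {q : K} {A : Type} [Ring A] [Algebra K A]

theorem mul_rearrange1 (z : RatF K ιM) (X P Y : AVal K ιM A) :
    X * ((inF K ιM A z * P) * Y) = inF K ιM A z * (X * (P * Y)) := by
  rw [mul_assoc (inF K ιM A z) P Y, ← mul_assoc X (inF K ιM A z) (P * Y), ← inF_commute,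
    mul_assoc]

set_option maxHeartbeats 1000000 in
theorem symM_absorb_inner [CharZero K] (hq : q ≠ 0) (n m : ℕ →₀ ℕ) (g : ℕ → ℕ)
    (hgm : ∀ a, m a ≠ 0 → g a + m a ≤ n a)
    (X Y : AVal K ιM A)
    (hXY : ∀ (a : ℕ) (h : g a + m a ≤ n a) (σ : Equiv.Perm (Fin (m a))),
      renA K ιM A (extPerm ιM (vtype a (n a)) (vtype_inj a (n a))
          (embedPerm (g a) (m a) (n a) h σ)) (Equiv.injective _) X = X ∧
      renA K ιM A (extPerm ιM (vtype a (n a)) (vtype_inj a (n a))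
          (embedPerm (g a) (m a) (n a) h σ)) (Equiv.injective _) Y = Y)
    (H : AVal K ιM A) :
    symM K A q n (X * (renA K ιM A (shiftFun g) (shiftFun_inj g) (symM K A q m H) * Y))
      = symM K A q n (X * (renA K ιM A (shiftFun g) (shiftFun_inj g) H * Y)) := by
  rw [symM_eq_symList m]
  have main : ∀ L : List ℕ, (∀ a ∈ L, m a ≠ 0) → ∀ H : AVal K ιM A,
      symM K A q n (X * (renA K ιM A (shiftFun g) (shiftFun_inj g) (symList q A m L H) * Y))
        = symM K A q n (X * (renA K ιM A (shiftFun g) (shiftFun_inj g) H * Y)) := by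
    intro L
    induction L with
    | nil => intro _ H; rfl
    | cons a L ih =>
      intro hmem H
      have ha : m a ≠ 0 := hmem a (List.mem_cons_self (a := a) (l := L))
      have h : g a + m a ≤ n a := hgm a ha
      have hna : n a ≠ 0 := by omega
      set H' := symList q A m L H with hH'
      have hterm : ∀ σ : Equiv.Perm (Fin (m a)),
          symM K A q n (X * (renA K ιM A (shiftFun g) (shiftFun_inj g)
              (piOp K ιM A q (vtype a (m a)) (vtype_inj a (m a)) σ H') * Y))
            = symM K A q n (X * (renA K ιM A (shiftFun g) (shiftFun_inj g) H' * Y)) := by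
        intro σ
        have e1 : renA K ιM A (shiftFun g) (shiftFun_inj g)
              (piOp K ιM A q (vtype a (m a)) (vtype_inj a (m a)) σ H')
            = piOp K ιM A q (vtype a (n a)) (vtype_inj a (n a))
                (embedPerm (g a) (m a) (n a) h σ)
                (renA K ιM A (shiftFun g) (shiftFun_inj g) H') := by
          simp only [piOp]
          rw [map_mul, renA_inF, renHom_shift_qWeight σ g (n a) h, renA_comp, renA_comp]
          congr 1
          apply renA_congr
          exact funext (shift_extPerm a (m a) σ g (n a) h)
        rw [e1]
        obtain ⟨hXf, hYf⟩ := hXY a h σ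
        have e2 : X * (piOp K ιM A q (vtype a (n a)) (vtype_inj a (n a))
              (embedPerm (g a) (m a) (n a) h σ)
              (renA K ιM A (shiftFun g) (shiftFun_inj g) H') * Y)
            = piOp K ιM A q (vtype a (n a)) (vtype_inj a (n a))
                (embedPerm (g a) (m a) (n a) h σ)
                (X * (renA K ιM A (shiftFun g) (shiftFun_inj g) H' * Y)) := by
          simp only [piOp]
          rw [map_mul, map_mul, hXf, hYf]
          exact mul_rearrange1 _ X _ Y
        rw [e2]
        exact symM_absorb hq n hna _ _
      show symM K A q n (X * (renA K ιM A (shiftFun g) (shiftFun_inj g)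
          (qSym K ιM A q (vtype a (m a)) (vtype_inj a (m a)) H') * Y)) = _
      simp only [qSym]
      rw [map_smul, map_sum, smul_mul_assoc, mul_smul_comm, symM_smul,
        Finset.sum_mul, Finset.mul_sum, symM_sum]
      rw [Finset.sum_congr rfl (fun σ _ => hterm σ)]
      rw [Finset.sum_const, Finset.card_univ, Fintype.card_perm, Fintype.card_fin]
      rw [← Nat.cast_smul_eq_nsmul K, smul_smul,
        inv_mul_cancel₀ (Nat.cast_ne_zero.mpr (Nat.factorial_ne_zero (m a))), one_smul]
      exact ih (fun b hb => hmem b (List.mem_cons_of_mem a hb)) H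
  exact main _ (fun a haL => Finsupp.mem_support_iff.mp ((Finset.mem_sort _).mp haL)) H

end Absorb
section Main

open Finset Equiv

variable {K : Type} [Field K] [CharZero K] {q : K} {A : Type} [Ring A] [Algebra K A]

theorem renA_shift_zero (x : AVal K ιM A) :
    renA K ιM A (shiftFun (fun _ => 0)) (shiftFun_inj _) x = x := by
  rw [renA_congr (shiftFun_inj _) (fun a b h => h) shiftFun_zero]
  exact renA_id _ x

theorem mul_rearrange2 (z1 z2 : RatF K ιM) (P Q R : AVal K ιM A) :
    inF K ιM A z1 * ((inF K ιM A z2 * (P * Q)) * R)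
      = inF K ιM A (z1 * z2) * (P * (Q * R)) := by
  rw [mul_assoc (inF K ιM A z2) (P * Q) R, ← mul_assoc (inF K ιM A z1) (inF K ιM A z2) _,
    ← map_mul, mul_assoc P Q R]

theorem mul_rearrange3 (z1 z2 : RatF K ιM) (P Q : AVal K ιM A) :
    (inF K ιM A z1 * P) * (inF K ιM A z2 * Q) = inF K ιM A (z1 * z2) * (P * Q) := by
  rw [mul_assoc (inF K ιM A z1) P _, ← mul_assoc P (inF K ιM A z2) Q, ← inF_commute,
    mul_assoc (inF K ιM A z2) P Q, ← mul_assoc (inF K ιM A z1) (inF K ιM A z2) _, ← map_mul]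

theorem shiftFun_comp (g1 g2 : ℕ → ℕ) :
    shiftFun g1 ∘ shiftFun g2 = shiftFun (fun b => g2 b + g1 b) := by
  funext x
  show ((x.1, x.2 + g2 x.1 + g1 x.1) : ιM) = (x.1, x.2 + (g2 x.1 + g1 x.1))
  rw [Nat.add_assoc]

set_option maxHeartbeats 2000000 in
theorem star_term_left (hq : q ≠ 0) (N : ℕ) (SA SB SC : QSeriesM K A q N)
    (n s r : ℕ →₀ ℕ) (hs : s ≤ n) (hr : r ≤ n - s) :
    symM K A q n (inF K ιM A (Zser K q N s n) *
        (renA K ιM A (shiftFun (s ·)) (shiftFun_inj _)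
          (symM K A q (n - s)
            (inF K ιM A (Zser K q N r (n - s)) *
              (renA K ιM A (shiftFun (r ·)) (shiftFun_inj _) (SA.coeff (n - s - r)) *
                SB.coeff r)))
          * SC.coeff s))
      = symM K A q n (inF K ιM A (Zser K q N (s + r) n * Zser K q N s (s + r)) *
          (renA K ιM A (shiftFun ((s + r) ·)) (shiftFun_inj _) (SA.coeff (n - (s + r))) *
            (renA K ιM A (shiftFun (s ·)) (shiftFun_inj _) (SB.coeff r) * SC.coeff s))) := by
  have hsr : ∀ b, s b + r b ≤ n b := by
    intro b
    have h1 := Finsupp.le_def.mp hs b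
    have h2 := Finsupp.le_def.mp hr b
    rw [Finsupp.tsub_apply] at h2
    omega
  have hgm' : ∀ a, (n - s) a ≠ 0 → s a + (n - s) a ≤ n a := by
    intro a _
    rw [Finsupp.tsub_apply]
    have := hsr a
    omega
  have hXY' : ∀ (a : ℕ) (h : s a + (n - s) a ≤ n a) (σ : Equiv.Perm (Fin ((n - s) a))),
      renA K ιM A (extPerm ιM (vtype a (n a)) (vtype_inj a (n a))
          (embedPerm (s a) ((n - s) a) (n a) h σ)) (Equiv.injective _)
        (inF K ιM A (Zser K q N s n)) = inF K ιM A (Zser K q N s n) ∧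
      renA K ιM A (extPerm ιM (vtype a (n a)) (vtype_inj a (n a))
          (embedPerm (s a) ((n - s) a) (n a) h σ)) (Equiv.injective _)
        (SC.coeff s) = SC.coeff s := by
    intro a h σ
    constructor
    · rw [renA_inF]
      congr 1
      exact Zser_ren_embed N s n a (s a) ((n - s) a) h (by have := hsr a; omega)
        (Or.inr le_rfl) σ
    · apply SC.supp_vars
      intro b i hi
      by_cases hba : b = a
      · subst hba
        exact extPerm_embed_fix h σ (Or.inr (Or.inl hi))
      · exact extPerm_vtype_fix _ hba
  rw [symM_absorb_inner hq n (n - s) (s ·) hgm' _ _ hXY']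
  congr 1
  rw [map_mul, map_mul, renA_inF, renA_comp, mul_rearrange2, Zser_cocycle N s r n hsr]
  rw [renA_congr ((shiftFun_inj (s ·)).comp (shiftFun_inj (r ·))) (shiftFun_inj ((s + r) ·))
    (by
      rw [shiftFun_comp]
      funext x
      show ((x.1, x.2 + (r x.1 + s x.1)) : ιM) = (x.1, x.2 + (s + r) x.1)
      rw [Finsupp.add_apply]
      exact Prod.ext rfl (by omega))]
  rw [tsub_tsub]

set_option maxHeartbeats 2000000 in
theorem star_term_right (hq : q ≠ 0) (N : ℕ) (SA SB SC : QSeriesM K A q N)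
    (n p t : ℕ →₀ ℕ) (hp : p ≤ n) (ht : t ≤ p) :
    symM K A q n (inF K ιM A (Zser K q N p n) *
        (renA K ιM A (shiftFun (p ·)) (shiftFun_inj _) (SA.coeff (n - p)) *
          symM K A q p (inF K ιM A (Zser K q N t p) *
            (renA K ιM A (shiftFun (t ·)) (shiftFun_inj _) (SB.coeff (p - t)) * SC.coeff t))))
      = symM K A q n (inF K ιM A (Zser K q N p n * Zser K q N t p) *
          (renA K ιM A (shiftFun (p ·)) (shiftFun_inj _) (SA.coeff (n - p)) *
            (renA K ιM A (shiftFun (t ·)) (shiftFun_inj _) (SB.coeff (p - t)) * SC.coeff t))) := by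
  have hpn : ∀ b, p b ≤ n b := fun b => Finsupp.le_def.mp hp b
  have hgm' : ∀ a, p a ≠ 0 → 0 + p a ≤ n a := by
    intro a _
    have := hpn a
    omega
  have hXY' : ∀ (a : ℕ) (h : 0 + p a ≤ n a) (σ : Equiv.Perm (Fin (p a))),
      renA K ιM A (extPerm ιM (vtype a (n a)) (vtype_inj a (n a))
          (embedPerm 0 (p a) (n a) h σ)) (Equiv.injective _)
        (inF K ιM A (Zser K q N p n)
          * renA K ιM A (shiftFun (p ·)) (shiftFun_inj _) (SA.coeff (n - p)))
        = inF K ιM A (Zser K q N p n)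
          * renA K ιM A (shiftFun (p ·)) (shiftFun_inj _) (SA.coeff (n - p)) ∧
      renA K ιM A (extPerm ιM (vtype a (n a)) (vtype_inj a (n a))
          (embedPerm 0 (p a) (n a) h σ)) (Equiv.injective _) (1 : AVal K ιM A) = 1 := by
    intro a h σ
    constructor
    · rw [map_mul, renA_inF]
      have hZ := Zser_ren_embed (K := K) (q := q) N p n a 0 (p a) h (hpn a) (Or.inl (by omega)) σ
      rw [hZ, renA_comp]
      congr 1
      apply renA_congr
      funext x
      show extPerm ιM (vtype a (n a)) (vtype_inj a (n a)) (embedPerm 0 (p a) (n a) h σ)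
          (shiftFun (p ·) x) = shiftFun (p ·) x
      by_cases hxa : x.1 = a
      · apply extPerm_embed_fix h σ
        right; right
        show 0 + p a ≤ x.2 + p x.1
        rw [hxa]
        omega
      · exact extPerm_vtype_fix _ (show (shiftFun (p ·) x).1 ≠ a from hxa)
    · exact map_one _
  have e0 : inF K ιM A (Zser K q N p n) *
        (renA K ιM A (shiftFun (p ·)) (shiftFun_inj _) (SA.coeff (n - p)) *
          symM K A q p (inF K ιM A (Zser K q N t p) *
            (renA K ιM A (shiftFun (t ·)) (shiftFun_inj _) (SB.coeff (p - t)) * SC.coeff t)))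
      = (inF K ιM A (Zser K q N p n)
            * renA K ιM A (shiftFun (p ·)) (shiftFun_inj _) (SA.coeff (n - p))) *
          (renA K ιM A (shiftFun (fun _ => 0)) (shiftFun_inj _)
            (symM K A q p (inF K ιM A (Zser K q N t p) *
              (renA K ιM A (shiftFun (t ·)) (shiftFun_inj _) (SB.coeff (p - t)) * SC.coeff t)))
            * 1) := by
    rw [renA_shift_zero, mul_one, mul_assoc]
  rw [e0, symM_absorb_inner hq n p (fun _ => 0) hgm' _ _ hXY', renA_shift_zero, mul_one]
  congr 1
  rw [mul_rearrange3]

end Main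
set_option maxHeartbeats 2000000 in
/-- The `⋆`-product of `q`-symmetric generating series is associative:
for every multi-index `n̄` the coefficients of `(𝒜 ⋆ ℬ) ⋆ 𝒞` and `𝒜 ⋆ (ℬ ⋆ 𝒞)` coincide. -/
theorem star_assoc
    (K : Type) [Field K] [CharZero K] (q : K) (hq : q ≠ 0) (hq2 : q ^ 2 ≠ 1)
    (A : Type) [Ring A] [Algebra K A] (N : ℕ) (hN : 2 ≤ N) (SA SB SC : QSeriesM K A q N) (n : ℕ →₀ ℕ) :
    starM K A q N (starM K A q N SA.coeff SB.coeff) SC.coeff n =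
      starM K A q N SA.coeff (starM K A q N SB.coeff SC.coeff) n := by
  classical
  simp only [starM]
  have L1 : ∀ s ∈ Finset.Iic n,
      symM K A q n (inF K ιM A (Zser K q N s n) *
        (renA K ιM A (shiftFun (s ·)) (shiftFun_inj _)
          (∑ r ∈ Finset.Iic (n - s), symM K A q (n - s) (inF K ιM A (Zser K q N r (n - s)) *
            (renA K ιM A (shiftFun (r ·)) (shiftFun_inj _) (SA.coeff (n - s - r)) * SB.coeff r)))
          * SC.coeff s))
      = ∑ r ∈ Finset.Iic (n - s),
          symM K A q n (inF K ιM A (Zser K q N (s + r) n * Zser K q N s (s + r)) *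
            (renA K ιM A (shiftFun ((s + r) ·)) (shiftFun_inj _) (SA.coeff (n - (s + r))) *
              (renA K ιM A (shiftFun (s ·)) (shiftFun_inj _) (SB.coeff r) * SC.coeff s))) := by
    intro s hs
    rw [map_sum, Finset.sum_mul, Finset.mul_sum, symM_sum]
    exact Finset.sum_congr rfl (fun r hr =>
      star_term_left hq N SA SB SC n s r (Finset.mem_Iic.mp hs) (Finset.mem_Iic.mp hr))
  have R1 : ∀ p ∈ Finset.Iic n,
      symM K A q n (inF K ιM A (Zser K q N p n) *
        (renA K ιM A (shiftFun (p ·)) (shiftFun_inj _) (SA.coeff (n - p)) *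
          (∑ t ∈ Finset.Iic p, symM K A q p (inF K ιM A (Zser K q N t p) *
            (renA K ιM A (shiftFun (t ·)) (shiftFun_inj _) (SB.coeff (p - t)) * SC.coeff t)))))
      = ∑ t ∈ Finset.Iic p,
          symM K A q n (inF K ιM A (Zser K q N p n * Zser K q N t p) *
            (renA K ιM A (shiftFun (p ·)) (shiftFun_inj _) (SA.coeff (n - p)) *
              (renA K ιM A (shiftFun (t ·)) (shiftFun_inj _) (SB.coeff (p - t)) * SC.coeff t))) := by
    intro p hp
    rw [Finset.mul_sum, Finset.mul_sum, symM_sum]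
    exact Finset.sum_congr rfl (fun t ht =>
      star_term_right hq N SA SB SC n p t (Finset.mem_Iic.mp hp) (Finset.mem_Iic.mp ht))
  rw [Finset.sum_congr rfl L1, Finset.sum_congr rfl R1]
  rw [Finset.sum_sigma', Finset.sum_sigma']
  apply Finset.sum_nbij'
    (i := fun x : Σ _ : ℕ →₀ ℕ, ℕ →₀ ℕ => (⟨x.1 + x.2, x.1⟩ : Σ _ : ℕ →₀ ℕ, ℕ →₀ ℕ))
    (j := fun y : Σ _ : ℕ →₀ ℕ, ℕ →₀ ℕ => (⟨y.2, y.1 - y.2⟩ : Σ _ : ℕ →₀ ℕ, ℕ →₀ ℕ))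
  · rintro ⟨s, r⟩ hx
    rw [Finset.mem_sigma, Finset.mem_Iic, Finset.mem_Iic] at hx ⊢
    obtain ⟨h1, h2⟩ := hx
    constructor
    · rw [Finsupp.le_def] at h1 h2 ⊢
      intro b
      have hb1 := h1 b
      have hb2 := h2 b
      rw [Finsupp.tsub_apply] at hb2
      rw [Finsupp.add_apply]
      omega
    · exact le_self_add
  · rintro ⟨p, t⟩ hy
    rw [Finset.mem_sigma, Finset.mem_Iic, Finset.mem_Iic] at hy ⊢
    obtain ⟨h1, h2⟩ := hy
    exact ⟨le_trans h2 h1, tsub_le_tsub_right h1 t⟩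
  · rintro ⟨s, r⟩ _
    show (⟨s, s + r - s⟩ : Σ _ : ℕ →₀ ℕ, ℕ →₀ ℕ) = ⟨s, r⟩
    rw [add_tsub_cancel_left]
  · rintro ⟨p, t⟩ hy
    rw [Finset.mem_sigma, Finset.mem_Iic, Finset.mem_Iic] at hy
    show (⟨t + (p - t), t⟩ : Σ _ : ℕ →₀ ℕ, ℕ →₀ ℕ) = ⟨p, t⟩
    rw [add_tsub_cancel_of_le hy.2]
  · rintro ⟨s, r⟩ _
    simp only [add_tsub_cancel_left]
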